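/- Let Q(t), Z(t) ≥ 0 be sequences with Z(t+1) ≥ Z(t) + ε − μ(t) − d(t)·s whenever Q(τ) > 0 for all τ in the relevant interval, and suppose Z(t) ≤ Z_max and Q(t) ≤ Q_max for all t. Fix t and suppose Q(τ) > 0 for all τ ∈ [t+1, t+D] and Σ_{τ=t+1}^{t+D} [μ(τ) + d(τ)·s] < Q_max. Then ε·D < Q_max + Z_max. -/

import Mathlib

/-- Core contradiction inequality of the worst-case-delay argument: if `Q(τ) > 0`
on `[t+1, t+D]` and the total service plus drops over that window is less than
`Q_max`, then `ε·D < Q_max + Z_max`. -/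
theorem stmt6 (ε s Qmax Zmax : ℝ) (hε : 0 < ε) (hs : 0 < s)
    (Q Z μ d : ℕ → ℝ) (t D : ℕ)
    (hμ : ∀ τ, 0 ≤ μ τ) (hd : ∀ τ, 0 ≤ d τ)
    (hZnonneg : ∀ τ, 0 ≤ Z τ) (hZb : ∀ τ, Z τ ≤ Zmax) (hQb : ∀ τ, Q τ ≤ Qmax)
    (hZrec : ∀ τ, 0 < Q τ → Z τ + ε - μ τ - d τ * s ≤ Z (τ + 1))
    (hQpos : ∀ τ ∈ Finset.Icc (t + 1) (t + D), 0 < Q τ)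
    (hsum : ∑ τ ∈ Finset.Icc (t + 1) (t + D), (μ τ + d τ * s) < Qmax) :
    ε * D < Qmax + Zmax := by
  have key : ∀ k : ℕ, (∀ τ ∈ Finset.Icc (t + 1) (t + k), 0 < Q τ) →
      Z (t + 1) + ε * k - ∑ τ ∈ Finset.Icc (t + 1) (t + k), (μ τ + d τ * s)
        ≤ Z (t + k + 1) := by
    intro k
    induction k with
    | zero => simp
    | succ n ih =>
      intro hpos
      have hsub : ∀ τ ∈ Finset.Icc (t + 1) (t + n), 0 < Q τ := by
        intro τ hτ
        apply hpos
        simp only [Finset.mem_Icc] at hτ ⊢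
        omega
      have hins : Finset.Icc (t + 1) (t + (n + 1)) =
          insert (t + n + 1) (Finset.Icc (t + 1) (t + n)) := by
        ext x; simp [Finset.mem_Icc]; omega
      have hmem : 0 < Q (t + n + 1) := by
        apply hpos; simp only [Finset.mem_Icc]; omega
      have hrec := hZrec (t + n + 1) hmem
      have hsum' : ∑ τ ∈ Finset.Icc (t + 1) (t + (n + 1)), (μ τ + d τ * s)
          = (μ (t + n + 1) + d (t + n + 1) * s)
            + ∑ τ ∈ Finset.Icc (t + 1) (t + n), (μ τ + d τ * s) := by
        rw [hins, Finset.sum_insert (by simp)]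
      have := ih hsub
      push_cast
      rw [hsum']
      have : t + (n + 1) + 1 = (t + n + 1) + 1 := by omega
      rw [this]
      nlinarith [ih hsub]
  have h1 := key D hQpos
  have h2 := hZb (t + D + 1)
  have h3 := hZnonneg (t + 1)
  linarith
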